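/- Let p, q be positive integers, n = p + q, and let u be a descending shuffle and v an ascending shuffle in S_n with u ≥ v in the Bruhat order. Then #{(i,j) : i < j, u(i) > p, u(j) ≤ p} − #{(i,j) : i < j, v(i) > p, v(j) ≤ p} = Σ_{(i,j) ∈ M(u,v)} (j − i). -/

import Mathlib

/-- The rank function `r_w(i,j) = #{k ≤ i : w(k) ≤ j}` (positions and values 1-indexed). -/
def rk {n : ℕ} (w : Equiv.Perm (Fin n)) (i j : ℕ) : ℕ :=
  (Finset.univ.filter (fun k : Fin n => (k : ℕ) + 1 ≤ i ∧ (w k : ℕ) + 1 ≤ j)).card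

/-- The Bruhat order: `u ≤ v` iff `r_u(i,j) ≥ r_v(i,j)` for all `i, j`. -/
def BruhatLE {n : ℕ} (u v : Equiv.Perm (Fin n)) : Prop :=
  ∀ i j : ℕ, rk v i j ≤ rk u i j

/-- `u` is a descending shuffle of `p,…,1` and `n,…,p+1`. -/
def DescShuffle (p : ℕ) {n : ℕ} (u : Equiv.Perm (Fin n)) : Prop :=
  ∀ i j : Fin n, i < j →
    ((u i : ℕ) + 1 ≤ p ∧ (u j : ℕ) + 1 ≤ p → u j < u i) ∧
    (p < (u i : ℕ) + 1 ∧ p < (u j : ℕ) + 1 → u j < u i)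

/-- `v` is an ascending shuffle of `1,…,p` and `p+1,…,n`. -/
def AscShuffle (p : ℕ) {n : ℕ} (v : Equiv.Perm (Fin n)) : Prop :=
  ∀ i j : Fin n, i < j →
    ((v i : ℕ) + 1 ≤ p ∧ (v j : ℕ) + 1 ≤ p → v i < v j) ∧
    (p < (v i : ℕ) + 1 ∧ p < (v j : ℕ) + 1 → v i < v j)

/-- Position `i` is an opener for the pair `(u,v)`: `u(i) > p` and `v(i) ≤ p`. -/
def IsOpener (p : ℕ) {n : ℕ} (u v : Equiv.Perm (Fin n)) (i : Fin n) : Prop :=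
  p < (u i : ℕ) + 1 ∧ (v i : ℕ) + 1 ≤ p

/-- Position `j` is a closer for the pair `(u,v)`: `u(j) ≤ p` and `v(j) > p`. -/
def IsCloser (p : ℕ) {n : ℕ} (u v : Equiv.Perm (Fin n)) (j : Fin n) : Prop :=
  (u j : ℕ) + 1 ≤ p ∧ p < (v j : ℕ) + 1

/-- One step of the left-to-right scan constructing the canonical matching.  The state is a
pair (stack of not-yet-matched openers, most recent on top; list of matched pairs so far).
At an opener we push it onto the stack; at a closer we match it with the top of the stack,
which is the largest unmatched opener to its left. -/
def cmStep (p : ℕ) {n : ℕ} (u v : Equiv.Perm (Fin n))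
    (st : List (Fin n) × List (Fin n × Fin n)) (k : Fin n) :
    List (Fin n) × List (Fin n × Fin n) :=
  if p < (u k : ℕ) + 1 ∧ (v k : ℕ) + 1 ≤ p then
    (k :: st.1, st.2)
  else if (u k : ℕ) + 1 ≤ p ∧ p < (v k : ℕ) + 1 then
    match st.1 with
    | [] => st
    | i :: s => (s, (i, k) :: st.2)
  else st

/-- The canonical matching `M(u,v)`, obtained by scanning positions from left to right and
matching each closer `j` with the largest opener `i < j` not already matched to an earlier
closer. -/
def canonicalMatching (p : ℕ) {n : ℕ} (u v : Equiv.Perm (Fin n)) : List (Fin n × Fin n) :=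
  ((List.finRange n).foldl (cmStep p u v) ([], [])).2

section Aux

open List

variable {n : ℕ}

lemma lt_of_mem_take {m : ℕ} {x : Fin n} (h : x ∈ (List.finRange n).take m) : (x:ℕ) < m := by
  obtain ⟨i, hi, rfl⟩ := List.mem_iff_getElem.1 h
  have h1 : i < m := by simp at hi; omega
  have h2 : i < n := by simp at hi; omega
  simp [List.getElem_take, h1, h2]

lemma le_of_mem_drop {m : ℕ} {x : Fin n} (h : x ∈ (List.finRange n).drop m) : m ≤ (x:ℕ) := by
  obtain ⟨i, hi, rfl⟩ := List.mem_iff_getElem.1 h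
  simp at hi
  simp [List.getElem_drop]

/-- generic four-way pointwise counting identity -/
lemma countP_four {α : Type*} (t : List α) (a b c d : α → Bool)
    (h : ∀ x ∈ t, ((if a x then 1 else 0) + (if b x then 1 else 0) : ℕ) =
      (if c x then 1 else 0) + (if d x then 1 else 0)) :
    t.countP a + t.countP b = t.countP c + t.countP d := by
  induction t with
  | nil => simp
  | cons x t ih =>
    have hx := h x List.mem_cons_self
    have ht := ih (fun y hy => h y (List.mem_cons_of_mem x hy))
    simp only [List.countP_cons]
    by_cases ha : a x <;> by_cases hb : b x <;> by_cases hc : c x <;> by_cases hd : d x <;>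
      simp [ha, hb, hc, hd] at hx ⊢ <;> omega

lemma sum_map_sub {α : Type*} (l : List α) (f g : α → ℤ) :
    (l.map (fun x => f x - g x)).sum = (l.map f).sum - (l.map g).sum := by
  induction l with
  | nil => simp
  | cons x t ih => simp [ih]; ring

end Aux

section Main

variable (p : ℕ) {n : ℕ} (u v : Equiv.Perm (Fin n))

/-- Boolean opener predicate. -/
def opb (k : Fin n) : Bool := decide (p < (u k : ℕ) + 1 ∧ (v k : ℕ) + 1 ≤ p)
/-- Boolean closer predicate. -/
def clb (k : Fin n) : Bool := decide ((u k : ℕ) + 1 ≤ p ∧ p < (v k : ℕ) + 1)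

lemma opb_iff (k : Fin n) : opb p u v k = true ↔ (p < (u k : ℕ) + 1 ∧ (v k : ℕ) + 1 ≤ p) := by
  simp [opb]

lemma clb_iff (k : Fin n) : clb p u v k = true ↔ ((u k : ℕ) + 1 ≤ p ∧ p < (v k : ℕ) + 1) := by
  simp [clb]

lemma foldl_spec (l : List (Fin n)) :
    ∀ (st : List (Fin n)) (acc : List (Fin n × Fin n)),
    (∀ l₁ k l₂, l = l₁ ++ k :: l₂ → IsCloser p u v k →
        l₁.countP (clb p u v) < st.length + l₁.countP (opb p u v)) →
    ((((l.foldl (cmStep p u v) (st, acc)).1 : Multiset (Fin n)) +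
       (((l.foldl (cmStep p u v) (st, acc)).2.map Prod.fst : List (Fin n)) : Multiset (Fin n)) =
       ((l.filter (opb p u v) : List (Fin n)) : Multiset (Fin n)) + (st : Multiset (Fin n)) +
       ((acc.map Prod.fst : List (Fin n)) : Multiset (Fin n))) ∧
     (((l.foldl (cmStep p u v) (st, acc)).2.map Prod.snd : List (Fin n)) =
       ((l.filter (clb p u v) : List (Fin n)) : Multiset (Fin n)) +
       ((acc.map Prod.snd : List (Fin n)) : Multiset (Fin n)))) := by
  induction l with
  | nil => simp
  | cons k t ih =>
    intro st acc H
    by_cases hop : p < (u k : ℕ) + 1 ∧ (v k : ℕ) + 1 ≤ p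
    · have hstep : cmStep p u v (st, acc) k = (k :: st, acc) := by
        simp [cmStep, hop]
      have hnotcl : ¬ ((u k : ℕ) + 1 ≤ p ∧ p < (v k : ℕ) + 1) := by omega
      rw [List.foldl_cons, hstep]
      have H' : ∀ l₁ k' l₂, t = l₁ ++ k' :: l₂ → IsCloser p u v k' →
          l₁.countP (clb p u v) < (k :: st).length + l₁.countP (opb p u v) := by
        intro l₁ k' l₂ ht hk'
        have := H (k :: l₁) k' l₂ (by rw [ht]; rfl) hk'
        simp only [List.countP_cons, List.length_cons, clb_iff, opb_iff] at this ⊢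
        simp [clb, opb, hop, hnotcl] at this
        omega
      obtain ⟨h1, h2⟩ := ih (k :: st) acc H'
      refine ⟨?_, ?_⟩
      · rw [h1]
        have : (k :: t).filter (opb p u v) = k :: t.filter (opb p u v) := by
          simp [List.filter_cons, opb, hop]
        rw [this]
        simp
      · rw [h2]
        have : (k :: t).filter (clb p u v) = t.filter (clb p u v) := by
          simp [List.filter_cons, clb, hnotcl]; omega
        rw [this]
    · by_cases hcl : (u k : ℕ) + 1 ≤ p ∧ p < (v k : ℕ) + 1
      · have hne := H [] k t rfl hcl
        simp only [List.countP_nil, List.length_nil] at hne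
        match st, hne with
        | i :: s, _ =>
        have hstep : cmStep p u v (i :: s, acc) k = (s, (i, k) :: acc) := by
          simp [cmStep, hop, hcl]; omega
        rw [List.foldl_cons, hstep]
        have H' : ∀ l₁ k' l₂, t = l₁ ++ k' :: l₂ → IsCloser p u v k' →
            l₁.countP (clb p u v) < s.length + l₁.countP (opb p u v) := by
          intro l₁ k' l₂ ht hk'
          have := H (k :: l₁) k' l₂ (by rw [ht]; rfl) hk'
          simp only [List.countP_cons, List.length_cons] at this
          simp [clb, opb, hop, hcl] at this
          simp [clb, opb] at *
          split_ifs at this <;> omega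
        obtain ⟨h1, h2⟩ := ih s ((i, k) :: acc) H'
        refine ⟨?_, ?_⟩
        · rw [h1]
          have : (k :: t).filter (opb p u v) = t.filter (opb p u v) := by
            simp [List.filter_cons, opb, hop]; omega
          rw [this]
          simp
          exact List.Perm.append_left _ List.perm_middle
        · rw [h2]
          have : (k :: t).filter (clb p u v) = k :: t.filter (clb p u v) := by
            simp [List.filter_cons, clb, hcl]
          rw [this]
          simp
      · have hstep : cmStep p u v (st, acc) k = (st, acc) := by
          simp only [cmStep, if_neg hop, if_neg hcl]
        rw [List.foldl_cons, hstep]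
        have H' : ∀ l₁ k' l₂, t = l₁ ++ k' :: l₂ → IsCloser p u v k' →
            l₁.countP (clb p u v) < st.length + l₁.countP (opb p u v) := by
          intro l₁ k' l₂ ht hk'
          have := H (k :: l₁) k' l₂ (by rw [ht]; rfl) hk'
          simp only [List.countP_cons] at this
          simp [clb, opb, hop, hcl] at this
          split_ifs at this <;> omega
        obtain ⟨h1, h2⟩ := ih st acc H'
        refine ⟨?_, ?_⟩
        · rw [h1]
          have : (k :: t).filter (opb p u v) = t.filter (opb p u v) := by
            simp [List.filter_cons, opb, hop]; omega
          rw [this]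
        · rw [h2]
          have : (k :: t).filter (clb p u v) = t.filter (clb p u v) := by
            simp [List.filter_cons, clb, hcl]; omega
          rw [this]

end Main
section Main2

variable (p : ℕ) {n : ℕ} (u v : Equiv.Perm (Fin n))

lemma card_filter_univ (P : Fin n → Prop) [DecidablePred P] :
    (Finset.univ.filter P).card = (List.finRange n).countP (fun i => decide (P i)) := by
  rw [List.countP_eq_length_filter]
  rfl

/-- Boolean "big value" predicate. -/
def bigb (w : Equiv.Perm (Fin n)) (i : Fin n) : Bool := decide (p < (w i : ℕ) + 1)

lemma rk_take (w : Equiv.Perm (Fin n)) (m : ℕ) :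
    rk w m p = ((List.finRange n).take m).countP (fun i => !(bigb p w i)) := by
  rw [rk, card_filter_univ]
  conv_lhs => rw [← List.take_append_drop m (List.finRange n)]
  rw [List.countP_append]
  have h1 : ((List.finRange n).take m).countP (fun i : Fin n => decide ((i : ℕ) + 1 ≤ m ∧ (w i : ℕ) + 1 ≤ p))
      = ((List.finRange n).take m).countP (fun i => !(bigb p w i)) := by
    apply List.countP_congr
    intro x hx
    have := lt_of_mem_take hx
    simp [bigb]
    omega
  have h2 : ((List.finRange n).drop m).countP (fun i : Fin n => decide ((i : ℕ) + 1 ≤ m ∧ (w i : ℕ) + 1 ≤ p)) = 0 := by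
    rw [List.countP_eq_zero]
    intro x hx
    have := le_of_mem_drop hx
    simp
    omega
  omega

lemma len_split (w : Equiv.Perm (Fin n)) (t : List (Fin n)) :
    t.countP (bigb p w) + t.countP (fun i => !(bigb p w i)) = t.length := by
  induction t with
  | nil => simp
  | cons x t ih =>
    simp only [List.countP_cons, List.length_cons]
    by_cases h : bigb p w x <;> simp [h] <;> omega

lemma four_way (t : List (Fin n)) :
    t.countP (clb p u v) + t.countP (bigb p u) = t.countP (opb p u v) + t.countP (bigb p v) := by
  apply countP_four
  intro x _
  by_cases h1 : p < (u x : ℕ) + 1 <;> by_cases h2 : p < (v x : ℕ) + 1 <;>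
    simp only [clb, opb, bigb, decide_eq_true_eq] <;> split_ifs <;> omega

lemma prefix_ineq (huv : BruhatLE v u) (m : ℕ) :
    ((List.finRange n).take m).countP (clb p u v) ≤ ((List.finRange n).take m).countP (opb p u v) := by
  have h4 := four_way p u v ((List.finRange n).take m)
  have hu' := len_split p u ((List.finRange n).take m)
  have hv' := len_split p v ((List.finRange n).take m)
  have hb := huv m p
  rw [rk_take, rk_take] at hb
  omega

lemma prefix_strict (huv : BruhatLE v u) (l₁ l₂ : List (Fin n)) (k : Fin n)
    (hsplit : List.finRange n = l₁ ++ k :: l₂) (hk : IsCloser p u v k) :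
    l₁.countP (clb p u v) < l₁.countP (opb p u v) := by
  have hlen : l₁.length < n := by
    have := congrArg List.length hsplit
    simp at this
    omega
  have hget : (List.finRange n)[l₁.length]'(by simp [hlen]) = k := by
    rw [List.getElem_of_eq hsplit]
    simp [List.getElem_append_right]
  have htake : (List.finRange n).take l₁.length = l₁ := by
    conv_lhs => rw [hsplit]
    exact List.take_left
  have hsucc : (List.finRange n).take (l₁.length + 1) = l₁ ++ [k] := by
    rw [List.take_succ, htake]
    have h2 : (List.finRange n)[l₁.length]? = some k := by
      rw [List.getElem?_eq_getElem (by simp [hlen])]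
      exact congrArg some hget
    rw [h2]
    rfl
  have := prefix_ineq p u v huv (l₁.length + 1)
  rw [hsucc, List.countP_append, List.countP_append] at this
  have hkcl : List.countP (clb p u v) [k] = 1 := by
    simp [clb, hk.1, hk.2]
  have hkop : List.countP (opb p u v) [k] = 0 := by
    have := hk.1
    simp [opb]
    omega
  omega

lemma totals_eq :
    (List.finRange n).countP (clb p u v) = (List.finRange n).countP (opb p u v) := by
  have h4 := four_way p u v (List.finRange n)
  have hbu : (List.finRange n).countP (bigb p u) = (List.finRange n).countP (bigb p v) := by
    have e1 : (List.finRange n).countP (bigb p u) =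
        (Finset.univ.filter (fun i : Fin n => p < (u i : ℕ) + 1)).card := by
      rw [card_filter_univ]; rfl
    have e2 : (List.finRange n).countP (bigb p v) =
        (Finset.univ.filter (fun i : Fin n => p < (v i : ℕ) + 1)).card := by
      rw [card_filter_univ]; rfl
    have e3 : ∀ w : Equiv.Perm (Fin n),
        (Finset.univ.filter (fun i : Fin n => p < (w i : ℕ) + 1)).card =
        (Finset.univ.filter (fun j : Fin n => p < (j : ℕ) + 1)).card := by
      intro w
      apply Finset.card_bij' (fun a _ => w a) (fun b _ => w.symm b) <;>
        simp
    rw [e1, e2, e3 u, e3 v]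
  omega

end Main2
section Main3

variable (p : ℕ) {n : ℕ} (u v : Equiv.Perm (Fin n))

lemma desc_pairs (hu : DescShuffle p u) :
    (Finset.univ.filter (fun ij : Fin n × Fin n =>
        ij.1 < ij.2 ∧ p < (u ij.1 : ℕ) + 1 ∧ p < (u ij.2 : ℕ) + 1)).card =
    (Finset.univ.filter (fun xy : Fin n × Fin n =>
        xy.1 < xy.2 ∧ p < (xy.1 : ℕ) + 1 ∧ p < (xy.2 : ℕ) + 1)).card := by
  apply Finset.card_bij' (fun ij _ => (u ij.2, u ij.1)) (fun xy _ => (u.symm xy.2, u.symm xy.1))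
  · rintro ⟨i, j⟩ hij
    simp only [Finset.mem_filter, Finset.mem_univ, true_and] at hij ⊢
    exact ⟨(hu i j hij.1).2 ⟨hij.2.1, hij.2.2⟩, hij.2.2, hij.2.1⟩
  · rintro ⟨x, y⟩ hxy
    simp only [Finset.mem_filter, Finset.mem_univ, true_and] at hxy ⊢
    have hb1 : p < (u (u.symm y) : ℕ) + 1 := by rw [Equiv.apply_symm_apply]; exact hxy.2.2
    have hb2 : p < (u (u.symm x) : ℕ) + 1 := by rw [Equiv.apply_symm_apply]; exact hxy.2.1
    refine ⟨?_, hb1, hb2⟩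
    rcases lt_trichotomy (u.symm y) (u.symm x) with h | h | h
    · exact h
    · exfalso; have hyx : y = x := by rw [← u.apply_symm_apply y, h, u.apply_symm_apply]
      rw [hyx] at hxy; exact lt_irrefl _ hxy.1
    · exfalso
      have hlt := (hu (u.symm x) (u.symm y) h).2 ⟨hb2, hb1⟩
      rw [Equiv.apply_symm_apply, Equiv.apply_symm_apply] at hlt
      exact absurd hxy.1 (not_lt.2 hlt.le)
  · rintro ⟨i, j⟩ _; simp
  · rintro ⟨x, y⟩ _; simp

lemma asc_pairs (hv : AscShuffle p v) :
    (Finset.univ.filter (fun ij : Fin n × Fin n =>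
        ij.1 < ij.2 ∧ p < (v ij.1 : ℕ) + 1 ∧ p < (v ij.2 : ℕ) + 1)).card =
    (Finset.univ.filter (fun xy : Fin n × Fin n =>
        xy.1 < xy.2 ∧ p < (xy.1 : ℕ) + 1 ∧ p < (xy.2 : ℕ) + 1)).card := by
  apply Finset.card_bij' (fun ij _ => (v ij.1, v ij.2)) (fun xy _ => (v.symm xy.1, v.symm xy.2))
  · rintro ⟨i, j⟩ hij
    simp only [Finset.mem_filter, Finset.mem_univ, true_and] at hij ⊢
    exact ⟨(hv i j hij.1).2 ⟨hij.2.1, hij.2.2⟩, hij.2.1, hij.2.2⟩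
  · rintro ⟨x, y⟩ hxy
    simp only [Finset.mem_filter, Finset.mem_univ, true_and] at hxy ⊢
    have hb1 : p < (v (v.symm x) : ℕ) + 1 := by rw [Equiv.apply_symm_apply]; exact hxy.2.1
    have hb2 : p < (v (v.symm y) : ℕ) + 1 := by rw [Equiv.apply_symm_apply]; exact hxy.2.2
    refine ⟨?_, hb1, hb2⟩
    rcases lt_trichotomy (v.symm x) (v.symm y) with h | h | h
    · exact h
    · exfalso; have hxy' : x = y := by rw [← v.apply_symm_apply x, h, v.apply_symm_apply]
      rw [hxy'] at hxy; exact lt_irrefl _ hxy.1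
    · exfalso
      have hlt := (hv (v.symm y) (v.symm x) h).2 ⟨hb2, hb1⟩
      rw [Equiv.apply_symm_apply, Equiv.apply_symm_apply] at hlt
      exact absurd hxy.1 (not_lt.2 hlt.le)
  · rintro ⟨i, j⟩ _; simp
  · rintro ⟨x, y⟩ _; simp

lemma card_big_eq (w : Equiv.Perm (Fin n)) :
    (Finset.univ.filter (fun i : Fin n => p < (w i : ℕ) + 1)).card =
    (Finset.univ.filter (fun j : Fin n => p < (j : ℕ) + 1)).card := by
  apply Finset.card_bij' (fun a _ => w a) (fun b _ => w.symm b) <;> simp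

lemma chi_sum_eq :
    ∑ i : Fin n, (if p < (u i : ℕ) + 1 then (1:ℤ) else 0) =
    ∑ i : Fin n, (if p < (v i : ℕ) + 1 then (1:ℤ) else 0) := by
  rw [Finset.sum_boole, Finset.sum_boole, card_big_eq p u, ← card_big_eq p v]

lemma key_sum (w : Equiv.Perm (Fin n)) :
    ((Finset.univ.filter (fun ij : Fin n × Fin n =>
        ij.1 < ij.2 ∧ p < (w ij.1 : ℕ) + 1 ∧ (w ij.2 : ℕ) + 1 ≤ p)).card : ℤ) +
    ((Finset.univ.filter (fun ij : Fin n × Fin n =>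
        ij.1 < ij.2 ∧ p < (w ij.1 : ℕ) + 1 ∧ p < (w ij.2 : ℕ) + 1)).card : ℤ) =
    ∑ i : Fin n, (if p < (w i : ℕ) + 1 then (1:ℤ) else 0) * ((n : ℤ) - 1 - (i : ℤ)) := by
  rw [← Finset.sum_boole (fun ij : Fin n × Fin n =>
        ij.1 < ij.2 ∧ p < (w ij.1 : ℕ) + 1 ∧ (w ij.2 : ℕ) + 1 ≤ p) Finset.univ,
      ← Finset.sum_boole (fun ij : Fin n × Fin n =>
        ij.1 < ij.2 ∧ p < (w ij.1 : ℕ) + 1 ∧ p < (w ij.2 : ℕ) + 1) Finset.univ,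
      ← Finset.sum_add_distrib, Fintype.sum_prod_type]
  apply Finset.sum_congr rfl
  intro i _
  by_cases hb : p < (w i : ℕ) + 1
  · have hIoi : ∑ j : Fin n, ((if (i < j ∧ p < (w i : ℕ) + 1 ∧ (w j : ℕ) + 1 ≤ p) then (1:ℤ) else 0) +
        (if (i < j ∧ p < (w i : ℕ) + 1 ∧ p < (w j : ℕ) + 1) then (1:ℤ) else 0)) =
        ∑ j : Fin n, (if i < j then (1:ℤ) else 0) := by
      apply Finset.sum_congr rfl
      intro j _
      by_cases hij : i < j <;> by_cases hbj : p < (w j : ℕ) + 1 <;>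
        simp [hij, hbj, hb] <;> omega
    rw [hIoi, Finset.sum_boole, if_pos hb]
    have h1 : Finset.filter (fun j => i < j) Finset.univ = Finset.Ioi i := by
      ext j; simp
    rw [h1, Fin.card_Ioi]
    have := i.isLt
    push_cast
    omega
  · have hz : ∑ j : Fin n, ((if (i < j ∧ p < (w i : ℕ) + 1 ∧ (w j : ℕ) + 1 ≤ p) then (1:ℤ) else 0) +
        (if (i < j ∧ p < (w i : ℕ) + 1 ∧ p < (w j : ℕ) + 1) then (1:ℤ) else 0)) = 0 := by
      apply Finset.sum_eq_zero
      intro j _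
      simp [hb]
    rw [hz, if_neg hb]
    ring

end Main3
section Main4

variable (p : ℕ) {n : ℕ} (u v : Equiv.Perm (Fin n))

lemma list_sum_filter_cl (f : Fin n → ℤ) :
    (((List.finRange n).filter (clb p u v)).map f).sum =
    ∑ i ∈ Finset.univ.filter (fun i : Fin n => (u i : ℕ) + 1 ≤ p ∧ p < (v i : ℕ) + 1), f i := rfl

lemma list_sum_filter_op (f : Fin n → ℤ) :
    (((List.finRange n).filter (opb p u v)).map f).sum =
    ∑ i ∈ Finset.univ.filter (fun i : Fin n => p < (u i : ℕ) + 1 ∧ (v i : ℕ) + 1 ≤ p), f i := rfl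

lemma matching_sum (huv : BruhatLE v u) :
    ((canonicalMatching p u v).map (fun pr => ((pr.2 : ℕ) : ℤ) - ((pr.1 : ℕ) : ℤ))).sum =
    (∑ i ∈ Finset.univ.filter (fun i : Fin n => (u i : ℕ) + 1 ≤ p ∧ p < (v i : ℕ) + 1), ((i : ℕ) : ℤ)) -
    (∑ i ∈ Finset.univ.filter (fun i : Fin n => p < (u i : ℕ) + 1 ∧ (v i : ℕ) + 1 ≤ p), ((i : ℕ) : ℤ)) := by
  obtain ⟨h1, h2⟩ := foldl_spec p u v (List.finRange n) [] []
    (fun l₁ k l₂ hs hk => by simpa using prefix_strict p u v huv l₁ l₂ k hs hk)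
  simp only [List.map_nil, Multiset.coe_nil, add_zero] at h1 h2
  set res := (List.finRange n).foldl (cmStep p u v) ([], []) with hres
  have hcm : canonicalMatching p u v = res.2 := rfl
  have hc1 := congrArg Multiset.card h1
  have hc2 := congrArg Multiset.card h2
  simp only [Multiset.coe_card, Multiset.card_add, List.length_map] at hc1 hc2
  have htot : ((List.finRange n).filter (clb p u v)).length =
      ((List.finRange n).filter (opb p u v)).length := by
    have := totals_eq p u v
    rwa [List.countP_eq_length_filter, List.countP_eq_length_filter] at this
  have hnil : res.1 = [] := List.eq_nil_of_length_eq_zero (by omega)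
  rw [hnil] at h1
  simp only [Multiset.coe_nil, zero_add] at h1
  rw [hcm]
  have hsub : (res.2.map (fun pr => ((pr.2 : ℕ) : ℤ) - ((pr.1 : ℕ) : ℤ))).sum
      = ((res.2.map Prod.snd).map (fun i : Fin n => ((i : ℕ) : ℤ))).sum
        - ((res.2.map Prod.fst).map (fun i : Fin n => ((i : ℕ) : ℤ))).sum := by
    rw [List.map_map, List.map_map]
    exact sum_map_sub res.2 _ _
  rw [hsub]
  have e1 : ((res.2.map Prod.snd).map (fun i : Fin n => ((i : ℕ) : ℤ))).sum
      = (((List.finRange n).filter (clb p u v)).map (fun i : Fin n => ((i : ℕ) : ℤ))).sum := by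
    have := congrArg (fun m : Multiset (Fin n) =>
      (m.map (fun i : Fin n => ((i : ℕ) : ℤ))).sum) h2
    simpa using this
  have e2 : ((res.2.map Prod.fst).map (fun i : Fin n => ((i : ℕ) : ℤ))).sum
      = (((List.finRange n).filter (opb p u v)).map (fun i : Fin n => ((i : ℕ) : ℤ))).sum := by
    have := congrArg (fun m : Multiset (Fin n) =>
      (m.map (fun i : Fin n => ((i : ℕ) : ℤ))).sum) h1
    simpa using this
  rw [e1, e2, list_sum_filter_cl, list_sum_filter_op]

end Main4

theorem stmt12 (p q n : ℕ) (hp : 0 < p) (hq : 0 < q) (hn : n = p + q)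
    (u v : Equiv.Perm (Fin n)) (hu : DescShuffle p u) (hv : AscShuffle p v)
    (huv : BruhatLE v u) :
    ((Finset.univ.filter (fun ij : Fin n × Fin n =>
        ij.1 < ij.2 ∧ p < (u ij.1 : ℕ) + 1 ∧ (u ij.2 : ℕ) + 1 ≤ p)).card : ℤ) -
      ((Finset.univ.filter (fun ij : Fin n × Fin n =>
        ij.1 < ij.2 ∧ p < (v ij.1 : ℕ) + 1 ∧ (v ij.2 : ℕ) + 1 ≤ p)).card : ℤ) =
    ((canonicalMatching p u v).map
      (fun pr => ((pr.2 : ℕ) : ℤ) - ((pr.1 : ℕ) : ℤ))).sum := by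
  have hk_u := key_sum p u
  have hk_v := key_sum p v
  have hBB : ((Finset.univ.filter (fun ij : Fin n × Fin n =>
        ij.1 < ij.2 ∧ p < (u ij.1 : ℕ) + 1 ∧ p < (u ij.2 : ℕ) + 1)).card : ℤ) =
      ((Finset.univ.filter (fun ij : Fin n × Fin n =>
        ij.1 < ij.2 ∧ p < (v ij.1 : ℕ) + 1 ∧ p < (v ij.2 : ℕ) + 1)).card : ℤ) := by
    have hBBn := (desc_pairs p u hu).trans (asc_pairs p v hv).symm
    exact_mod_cast hBBn
  rw [matching_sum p u v huv]
  have expand : (∑ i : Fin n, (if p < (u i : ℕ) + 1 then (1:ℤ) else 0) * ((n : ℤ) - 1 - (i : ℤ)))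
      - (∑ i : Fin n, (if p < (v i : ℕ) + 1 then (1:ℤ) else 0) * ((n : ℤ) - 1 - (i : ℤ)))
      = ∑ i : Fin n, ((if p < (v i : ℕ) + 1 then (1:ℤ) else 0)
          - (if p < (u i : ℕ) + 1 then (1:ℤ) else 0)) * ((i : ℕ) : ℤ) := by
    rw [← Finset.sum_sub_distrib]
    have hstep : ∀ i : Fin n,
        (if p < (u i : ℕ) + 1 then (1:ℤ) else 0) * ((n : ℤ) - 1 - (i : ℤ))
          - (if p < (v i : ℕ) + 1 then (1:ℤ) else 0) * ((n : ℤ) - 1 - (i : ℤ))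
        = ((if p < (u i : ℕ) + 1 then (1:ℤ) else 0)
            - (if p < (v i : ℕ) + 1 then (1:ℤ) else 0)) * ((n : ℤ) - 1)
          + ((if p < (v i : ℕ) + 1 then (1:ℤ) else 0)
            - (if p < (u i : ℕ) + 1 then (1:ℤ) else 0)) * ((i : ℕ) : ℤ) := by
      intro i; push_cast; ring
    rw [Finset.sum_congr rfl (fun i _ => hstep i), Finset.sum_add_distrib, ← Finset.sum_mul]
    have h0 : ∑ i : Fin n, ((if p < (u i : ℕ) + 1 then (1:ℤ) else 0)
        - (if p < (v i : ℕ) + 1 then (1:ℤ) else 0)) = 0 := by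
      rw [Finset.sum_sub_distrib, chi_sum_eq p u v, sub_self]
    rw [h0, zero_mul, zero_add]
  have hfin : (∑ i ∈ Finset.univ.filter (fun i : Fin n => (u i : ℕ) + 1 ≤ p ∧ p < (v i : ℕ) + 1), ((i : ℕ) : ℤ))
      - (∑ i ∈ Finset.univ.filter (fun i : Fin n => p < (u i : ℕ) + 1 ∧ (v i : ℕ) + 1 ≤ p), ((i : ℕ) : ℤ))
      = ∑ i : Fin n, ((if p < (v i : ℕ) + 1 then (1:ℤ) else 0)
          - (if p < (u i : ℕ) + 1 then (1:ℤ) else 0)) * ((i : ℕ) : ℤ) := by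
    rw [Finset.sum_filter, Finset.sum_filter, ← Finset.sum_sub_distrib]
    apply Finset.sum_congr rfl
    intro i _
    split_ifs <;> ring_nf <;> omega
  rw [hfin, ← expand]
  omega
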